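/- Fix θ ∈ [0,1/2), a real ε > 0, and an integer K ≥ 2. Let (m_n) be a sequence of positive integers with m_n → ∞, let (η_n) be a sequence in (0, 1/(2K)) with η_n → 0, and let (p_n) be a sequence in (0,1/2) such that n · p_n · I_θ ≥ (1+ε) · K · log m_n for all n. For each n, let {P_i : 1 ≤ i ≤ ⌊(1/K − η_n) n⌋}, {P'_i : 1 ≤ i ≤ ⌈η_n n⌉}, and {Θ_i : 1 ≤ i ≤ ⌊(1/K − η_n) n⌋} be mutually independent with P_i ~ Bern(p_n), P'_i ~ Bern(p_n), Θ_i ~ Bern(θ). Then m_n · P( Σ_{i=1}^{⌊(1/K − η_n) n⌋} P_i (1 − 2Θ_i) ≤ Σ_{i=1}^{⌈η_n n⌉} P'_i ) → 0 as n → ∞. -/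

import Mathlib

open MeasureTheory ProbabilityTheory Filter
open scoped ENNReal

/-- The Bernoulli distribution on `ℝ` with mean `q`. -/
noncomputable def bern (q : ℝ) : Measure ℝ :=
  (ENNReal.ofReal q) • Measure.dirac 1 + (ENNReal.ofReal (1 - q)) • Measure.dirac 0

lemma bern_univ {q : ℝ} (h0 : 0 ≤ q) (h1 : q ≤ 1) : bern q Set.univ = 1 := by
  simp only [bern, Measure.add_apply, Measure.smul_apply, smul_eq_mul, measure_univ, mul_one]
  rw [← ENNReal.ofReal_add h0 (by linarith)]
  norm_num

lemma bern_isProb {q : ℝ} (h0 : 0 ≤ q) (h1 : q ≤ 1) : IsProbabilityMeasure (bern q) :=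
  ⟨bern_univ h0 h1⟩

lemma bern_01 {q : ℝ} (h0 : 0 ≤ q) (h1 : q ≤ 1) : bern q ({0, 1} : Set ℝ) = 1 := by
  simp only [bern, Measure.add_apply, Measure.smul_apply, smul_eq_mul, Measure.dirac_apply]
  rw [Set.indicator_of_mem (by norm_num) 1, Set.indicator_of_mem (by norm_num) 1]
  simp only [Pi.one_apply, mul_one]
  rw [← ENNReal.ofReal_add h0 (by linarith)]
  norm_num

lemma integrable_smul_dirac {f : ℝ → ℝ} (hf : Measurable f) (c : ℝ≥0∞) (hc : c ≠ ⊤) (x : ℝ) :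
    Integrable f (c • Measure.dirac x) := by
  constructor
  · exact hf.aestronglyMeasurable
  · unfold HasFiniteIntegral
    rw [lintegral_smul_measure, lintegral_dirac]
    exact ENNReal.mul_lt_top hc.lt_top ENNReal.coe_lt_top

lemma integral_bern {q : ℝ} (h0 : 0 ≤ q) (h1 : q ≤ 1) {f : ℝ → ℝ} (hf : Measurable f) :
    ∫ x, f x ∂(bern q) = q * f 1 + (1 - q) * f 0 := by
  unfold bern
  rw [integral_add_measure (integrable_smul_dirac hf _ ENNReal.ofReal_ne_top 1)
    (integrable_smul_dirac hf _ ENNReal.ofReal_ne_top 0),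
    integral_smul_measure, integral_smul_measure, integral_dirac, integral_dirac,
    ENNReal.toReal_ofReal h0, ENNReal.toReal_ofReal (by linarith)]
  simp [smul_eq_mul]


/-- `I_θ = (√(1-θ) - √θ)²`. -/
noncomputable def IθQ (θ : ℝ) : ℝ := (Real.sqrt (1 - θ) - Real.sqrt θ) ^ 2

-- L6: joint law is product measure
lemma indep_map_pi {ι : Type*} [Fintype ι] {Ω : Type*} [MeasurableSpace Ω]
    (μ : Measure Ω) [IsProbabilityMeasure μ] (F G : ι → Ω → ℝ)
    (hG : ∀ i, Measurable (G i)) (hFG : ∀ i, F i =ᵐ[μ] G i)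
    (hind : iIndepFun F μ)
    (q : ι → Measure ℝ) (hq : ∀ i, Measure.map (F i) μ = q i)
    (hqp : ∀ i, IsProbabilityMeasure (q i)) :
    Measure.map (fun ω i => G i ω) μ = Measure.pi q := by
  haveI := hqp
  refine (Measure.pi_eq fun s hs => ?_).symm
  rw [Measure.map_apply (measurable_pi_lambda _ hG) (MeasurableSet.univ_pi hs)]
  have hpre : (fun ω i => G i ω) ⁻¹' (Set.pi Set.univ s) = ⋂ i ∈ Finset.univ, G i ⁻¹' s i := by
    ext ω; simp [Set.mem_pi]
  rw [hpre]
  have hae : ∀ᵐ ω ∂μ, ∀ i, F i ω = G i ω := ae_all_iff.mpr hFG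
  have hsame : μ (⋂ i ∈ Finset.univ, G i ⁻¹' s i) = μ (⋂ i ∈ Finset.univ, F i ⁻¹' s i) := by
    refine measure_congr ?_
    filter_upwards [hae] with ω hω
    have : ∀ i, G i ω = F i ω := fun i => (hω i).symm
    refine eq_iff_iff.mpr ?_
    show (ω ∈ ⋂ i ∈ Finset.univ, G i ⁻¹' s i) ↔ ω ∈ ⋂ i ∈ Finset.univ, F i ⁻¹' s i
    simp only [Set.mem_iInter, Set.mem_preimage, this]
  rw [hsame, (iIndepFun_iff_measure_inter_preimage_eq_mul.mp hind) Finset.univ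
    (fun i _ => hs i)]
  refine Finset.prod_congr rfl fun i _ => ?_
  have hFae : AEMeasurable (F i) μ := (hG i).aemeasurable.congr (hFG i).symm
  rw [← hq i, Measure.map_apply_of_aemeasurable hFae (hs i)]

-- L7: the rearranging map is measure preserving
lemma map_T (N M : ℕ) (μ1 μ2 μ3 : Measure ℝ) [IsProbabilityMeasure μ1]
    [IsProbabilityMeasure μ2] [IsProbabilityMeasure μ3] :
    Measure.map
      (fun z : (Fin N → ℝ × ℝ) × (Fin M → ℝ) =>
        (Sum.elim (fun i => (z.1 i).1)
          (Sum.elim (fun j => z.2 j) (fun i => (z.1 i).2)) : Fin N ⊕ (Fin M ⊕ Fin N) → ℝ))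
      ((Measure.pi fun _ : Fin N => μ1.prod μ3).prod (Measure.pi fun _ : Fin M => μ2))
    = Measure.pi (Sum.elim (fun _ : Fin N => μ1) (Sum.elim (fun _ : Fin M => μ2)
        (fun _ : Fin N => μ3))) := by
  haveI : ∀ i : Fin N ⊕ (Fin M ⊕ Fin N),
      SigmaFinite ((Sum.elim (fun _ : Fin N => μ1) (Sum.elim (fun _ : Fin M => μ2)
        (fun _ : Fin N => μ3))) i) := by
    rintro (i | j | i) <;> (dsimp only [Sum.elim]; infer_instance)
  refine (Measure.pi_eq (μ := Sum.elim (fun _ : Fin N => μ1) (Sum.elim (fun _ : Fin M => μ2)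
    (fun _ : Fin N => μ3))) fun s hs => ?_).symm
  have hT : Measurable (fun z : (Fin N → ℝ × ℝ) × (Fin M → ℝ) =>
      (Sum.elim (fun i => (z.1 i).1)
        (Sum.elim (fun j => z.2 j) (fun i => (z.1 i).2)) : Fin N ⊕ (Fin M ⊕ Fin N) → ℝ)) := by
    refine measurable_pi_lambda _ fun i => ?_
    rcases i with i | j | i
    · exact ((measurable_pi_apply i).comp measurable_fst).fst
    · exact (measurable_pi_apply j).comp measurable_snd
    · exact ((measurable_pi_apply i).comp measurable_fst).snd
  rw [Measure.map_apply hT (MeasurableSet.univ_pi fun i => hs i)]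
  have hpre : (fun z : (Fin N → ℝ × ℝ) × (Fin M → ℝ) =>
      (Sum.elim (fun i => (z.1 i).1)
        (Sum.elim (fun j => z.2 j) (fun i => (z.1 i).2)) : Fin N ⊕ (Fin M ⊕ Fin N) → ℝ))
        ⁻¹' (Set.pi Set.univ s)
      = (Set.pi Set.univ fun i : Fin N => s (Sum.inl i) ×ˢ s (Sum.inr (Sum.inr i))) ×ˢ
        (Set.pi Set.univ fun j : Fin M => s (Sum.inr (Sum.inl j))) := by
    ext z
    simp only [Set.mem_preimage, Set.mem_pi, Set.mem_univ, forall_true_left, Sum.forall,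
      Set.mem_prod, Sum.elim_inl, Sum.elim_inr, forall_and]
    tauto
  rw [hpre, Measure.prod_prod, Measure.pi_pi, Measure.pi_pi]
  rw [Fintype.prod_sum_type]
  simp only [Sum.elim_inl, Sum.elim_inr, Fintype.prod_sum_type, Measure.prod_prod]
  rw [Finset.prod_mul_distrib]
  ring


lemma chernoff_pi (N M : ℕ) (pp th τ : ℝ) (hp0 : 0 ≤ pp) (hp1 : pp ≤ 1)
    (hth0 : 0 ≤ th) (hth1 : th ≤ 1) (hτ : 0 ≤ τ) :
    ((Measure.pi (Sum.elim (fun _ : Fin N => bern pp)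
        (Sum.elim (fun _ : Fin M => bern pp) (fun _ : Fin N => bern th))))
      {x | ∑ i : Fin N, x (Sum.inl i) * (1 - 2 * x (Sum.inr (Sum.inr i)))
          ≤ ∑ j : Fin M, x (Sum.inr (Sum.inl j))}).toReal
      ≤ (1 - pp * (1 - (th * Real.exp τ + (1 - th) * Real.exp (-τ)))) ^ N
        * (1 + pp * (Real.exp τ - 1)) ^ M := by
  haveI h1 : IsProbabilityMeasure (bern pp) := bern_isProb hp0 hp1
  haveI h2 : IsProbabilityMeasure (bern th) := bern_isProb hth0 hth1
  set ρ : Measure (ℝ × ℝ) := (bern pp).prod (bern th) with hρ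
  haveI : IsProbabilityMeasure ρ := by rw [hρ]; infer_instance
  set κ : Measure ((Fin N → ℝ × ℝ) × (Fin M → ℝ)) :=
    (Measure.pi fun _ : Fin N => ρ).prod (Measure.pi fun _ : Fin M => bern pp) with hκ
  haveI : IsProbabilityMeasure κ := by rw [hκ]; infer_instance
  set u : ℝ × ℝ → ℝ := fun z => Real.exp (τ * (-(z.1 * (1 - 2 * z.2)))) with hu
  set v : ℝ → ℝ := fun b => Real.exp (τ * b) with hv
  have hu_meas : Measurable u := by
    apply Real.measurable_exp.comp; fun_prop
  have hv_meas : Measurable v := by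
    apply Real.measurable_exp.comp; fun_prop
  set H : (Fin N → ℝ × ℝ) × (Fin M → ℝ) → ℝ :=
    fun z => (∏ i, u (z.1 i)) * ∏ j, v (z.2 j) with hH
  have hH_meas : Measurable H := by
    apply Measurable.mul
    · exact Finset.measurable_prod _ fun i _ =>
        hu_meas.comp ((measurable_pi_apply i).comp measurable_fst)
    · exact Finset.measurable_prod _ fun j _ =>
        hv_meas.comp ((measurable_pi_apply j).comp measurable_snd)
  -- the event
  have hD : MeasurableSet {x : Fin N ⊕ (Fin M ⊕ Fin N) → ℝ |
      ∑ i : Fin N, x (Sum.inl i) * (1 - 2 * x (Sum.inr (Sum.inr i)))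
        ≤ ∑ j : Fin M, x (Sum.inr (Sum.inl j))} := by
    apply measurableSet_le <;> fun_prop
  have hT : Measurable (fun z : (Fin N → ℝ × ℝ) × (Fin M → ℝ) =>
      (Sum.elim (fun i => (z.1 i).1)
        (Sum.elim (fun j => z.2 j) (fun i => (z.1 i).2)) : Fin N ⊕ (Fin M ⊕ Fin N) → ℝ)) := by
    refine measurable_pi_lambda _ fun i => ?_
    rcases i with i | j | i
    · exact ((measurable_pi_apply i).comp measurable_fst).fst
    · exact (measurable_pi_apply j).comp measurable_snd
    · exact ((measurable_pi_apply i).comp measurable_fst).snd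
  rw [← map_T N M (bern pp) (bern pp) (bern th), Measure.map_apply hT hD]
  set E : Set ((Fin N → ℝ × ℝ) × (Fin M → ℝ)) :=
    {z | ∑ i : Fin N, (z.1 i).1 * (1 - 2 * (z.1 i).2) ≤ ∑ j : Fin M, z.2 j} with hEdef
  have hEeq : (fun z : (Fin N → ℝ × ℝ) × (Fin M → ℝ) =>
      (Sum.elim (fun i => (z.1 i).1)
        (Sum.elim (fun j => z.2 j) (fun i => (z.1 i).2)) : Fin N ⊕ (Fin M ⊕ Fin N) → ℝ))
      ⁻¹' {x | ∑ i : Fin N, x (Sum.inl i) * (1 - 2 * x (Sum.inr (Sum.inr i)))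
        ≤ ∑ j : Fin M, x (Sum.inr (Sum.inl j))} = E := rfl
  rw [hEeq]
  have hE_meas : MeasurableSet E := by rw [← hEeq]; exact hD.preimage hT
  -- H = exp of the gap
  have hHexp : ∀ z, H z = Real.exp (τ * ((∑ j : Fin M, z.2 j)
      - ∑ i : Fin N, (z.1 i).1 * (1 - 2 * (z.1 i).2))) := by
    intro z
    rw [hH]
    simp only [hu, hv, ← Real.exp_sum]
    rw [← Real.exp_add]
    congr 1
    rw [← Finset.mul_sum, ← Finset.mul_sum, Finset.sum_neg_distrib]
    ring
  have hHpos : ∀ z, 0 ≤ H z := fun z => by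
    rw [hHexp z]; exact (Real.exp_pos _).le
  have h1H : ∀ z ∈ E, 1 ≤ H z := by
    intro z hz
    rw [hHexp z]
    exact Real.one_le_exp (mul_nonneg hτ (sub_nonneg.2 hz))
  -- integrability
  have h01m : MeasurableSet ({0, 1} : Set ℝ) := by measurability
  have hSfull : κ ((Set.pi Set.univ fun _ : Fin N => ({0,1} : Set ℝ) ×ˢ ({0,1} : Set ℝ)) ×ˢ
      (Set.pi Set.univ fun _ : Fin M => ({0,1} : Set ℝ))) = 1 := by
    rw [hκ, Measure.prod_prod, Measure.pi_pi, Measure.pi_pi]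
    simp [hρ, Measure.prod_prod, bern_01 hp0 hp1, bern_01 hth0 hth1]
  have haefull : ∀ᵐ z ∂κ, z ∈ ((Set.pi Set.univ fun _ : Fin N =>
      ({0,1} : Set ℝ) ×ˢ ({0,1} : Set ℝ)) ×ˢ
      (Set.pi Set.univ fun _ : Fin M => ({0,1} : Set ℝ))) := by
    have hms : MeasurableSet ((Set.pi Set.univ fun _ : Fin N =>
        ({0,1} : Set ℝ) ×ˢ ({0,1} : Set ℝ)) ×ˢ
        (Set.pi Set.univ fun _ : Fin M => ({0,1} : Set ℝ))) :=
      ((MeasurableSet.univ_pi fun _ => h01m.prod h01m).prod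
        (MeasurableSet.univ_pi fun _ => h01m))
    exact ae_iff.mpr ((prob_compl_eq_zero_iff hms).mpr hSfull)
  have hbound_u : ∀ w : ℝ × ℝ, w.1 ∈ ({0,1} : Set ℝ) → w.2 ∈ ({0,1} : Set ℝ) →
      u w ≤ Real.exp τ := by
    rintro ⟨a, b⟩ ha hb
    simp only [Set.mem_insert_iff, Set.mem_singleton_iff] at ha hb
    rcases ha with rfl | rfl <;> rcases hb with rfl | rfl <;>
      · simp only [hu]
        rw [Real.exp_le_exp]
        nlinarith
  have hbound_v : ∀ b : ℝ, b ∈ ({0,1} : Set ℝ) → v b ≤ Real.exp τ := by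
    intro b hb
    simp only [Set.mem_insert_iff, Set.mem_singleton_iff] at hb
    rcases hb with rfl | rfl <;>
      · simp only [hv]
        rw [Real.exp_le_exp]
        nlinarith
  have hHint : Integrable H κ := by
    refine Integrable.mono' (integrable_const ((Real.exp τ) ^ N * (Real.exp τ) ^ M))
      hH_meas.aestronglyMeasurable ?_
    filter_upwards [haefull] with z hz
    obtain ⟨hz1, hz2⟩ := hz
    rw [Real.norm_eq_abs, abs_of_nonneg (hHpos z)]
    refine mul_le_mul ?_ ?_ (Finset.prod_nonneg fun j _ => (Real.exp_pos _).le)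
      (pow_nonneg (Real.exp_pos _).le _)
    · calc ∏ i, u (z.1 i) ≤ ∏ _i : Fin N, Real.exp τ :=
            Finset.prod_le_prod (fun i _ => (Real.exp_pos _).le)
              (fun i _ => hbound_u (z.1 i) (hz1 i (Set.mem_univ i)).1 (hz1 i (Set.mem_univ i)).2)
        _ = (Real.exp τ) ^ N := by simp
    · calc ∏ j, v (z.2 j) ≤ ∏ _j : Fin M, Real.exp τ :=
            Finset.prod_le_prod (fun j _ => (Real.exp_pos _).le)
              (fun j _ => hbound_v (z.2 j) (hz2 j (Set.mem_univ j)))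
        _ = (Real.exp τ) ^ M := by simp
  -- Markov step
  have key1 : (κ E).toReal ≤ ∫ z, H z ∂κ := by
    rw [← measureReal_def, ← integral_indicator_one hE_meas]
    refine integral_mono ((integrable_const 1).indicator hE_meas) hHint ?_
    intro z
    by_cases hz : z ∈ E
    · rw [Set.indicator_of_mem hz]; exact h1H z hz
    · rw [Set.indicator_of_notMem hz]; exact hHpos z
  -- factorization
  have key2 : ∫ z, H z ∂κ = (∫ w, u w ∂ρ) ^ N * (∫ b, v b ∂(bern pp)) ^ M := by
    rw [hκ, hH]
    rw [integral_prod_mul (fun w : Fin N → ℝ × ℝ => ∏ i, u (w i))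
      (fun y : Fin M → ℝ => ∏ j, v (y j))]
    congr 1
    · letI : MeasureSpace (ℝ × ℝ) := ⟨ρ⟩
      haveI : SigmaFinite (volume : Measure (ℝ × ℝ)) := by
        show SigmaFinite ρ; infer_instance
      simpa using MeasureTheory.integral_fintype_prod_eq_pow (ι := Fin N) (μ := ρ) u
    · letI : MeasureSpace ℝ := ⟨bern pp⟩
      haveI : SigmaFinite (volume : Measure ℝ) := by
        show SigmaFinite (bern pp); infer_instance
      simpa using MeasureTheory.integral_fintype_prod_eq_pow (ι := Fin M) (μ := bern pp) v
  -- value of ∫ u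
  have hu_int : Integrable u ρ := by
    have hfull : ρ (({0,1} : Set ℝ) ×ˢ ({0,1} : Set ℝ)) = 1 := by
      rw [hρ, Measure.prod_prod, bern_01 hp0 hp1, bern_01 hth0 hth1, mul_one]
    have haeρ : ∀ᵐ w ∂ρ, w ∈ (({0,1} : Set ℝ) ×ˢ ({0,1} : Set ℝ)) := by
      exact ae_iff.mpr ((prob_compl_eq_zero_iff (h01m.prod h01m)).mpr hfull)
    refine Integrable.mono' (integrable_const (Real.exp τ)) hu_meas.aestronglyMeasurable ?_
    filter_upwards [haeρ] with w hw
    rw [Real.norm_eq_abs, abs_of_nonneg (Real.exp_pos _).le]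
    exact hbound_u w hw.1 hw.2
  have hu_val : ∫ w, u w ∂ρ = 1 - pp * (1 - (th * Real.exp τ + (1 - th) * Real.exp (-τ))) := by
    rw [hρ, MeasureTheory.integral_prod u hu_int]
    have hinner : ∀ a : ℝ, (∫ b, u (a, b) ∂(bern th)) = th * u (a, 1) + (1 - th) * u (a, 0) :=
      fun a => integral_bern hth0 hth1 (by fun_prop)
    rw [integral_congr_ae (Filter.Eventually.of_forall fun a => hinner a)]
    rw [integral_bern hp0 hp1 (by fun_prop)]
    have e11 : u (1, 1) = Real.exp τ := by simp only [hu]; norm_num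
    have e10 : u (1, 0) = Real.exp (-τ) := by simp only [hu]; norm_num
    have e01 : u (0, 1) = 1 := by simp only [hu]; norm_num
    have e00 : u (0, 0) = 1 := by simp only [hu]; norm_num
    rw [e11, e10, e01, e00]
    ring
  have hv_val : ∫ b, v b ∂(bern pp) = 1 + pp * (Real.exp τ - 1) := by
    rw [integral_bern hp0 hp1 (by fun_prop)]
    have e1 : v 1 = Real.exp τ := by simp only [hv]; norm_num
    have e0 : v 0 = 1 := by simp only [hv]; norm_num
    rw [e1, e0]
    ring
  calc (κ E).toReal ≤ ∫ z, H z ∂κ := key1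
    _ = _ := by rw [key2, hu_val, hv_val]

set_option maxHeartbeats 1600000 in
theorem majority_vote_error_bound
    (θ : ℝ) (hθ : 0 ≤ θ ∧ θ < 1/2) (ε : ℝ) (hε : 0 < ε) (K : ℕ) (hK : 2 ≤ K)
    (m : ℕ → ℕ) (hm : Tendsto m atTop atTop)
    (η : ℕ → ℝ) (hη : ∀ n, η n ∈ Set.Ioo (0:ℝ) (1 / (2 * K)))
    (hη0 : Tendsto η atTop (nhds 0))
    (p : ℕ → ℝ) (hp : ∀ n, p n ∈ Set.Ioo (0:ℝ) (1/2))
    (hinfo : ∀ n, (1 + ε) * K * Real.log (m n) ≤ (n : ℝ) * p n * IθQ θ)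
    (Ω : ℕ → Type*) [∀ n, MeasurableSpace (Ω n)]
    (μ : ∀ n, Measure (Ω n)) [∀ n, IsProbabilityMeasure (μ n)]
    (P P' Θv : ∀ n, ℕ → Ω n → ℝ)
    (hP : ∀ n, ∀ i < ⌊(1/(K:ℝ) - η n) * n⌋₊, Measure.map (P n i) (μ n) = bern (p n))
    (hP' : ∀ n, ∀ i < ⌈η n * n⌉₊, Measure.map (P' n i) (μ n) = bern (p n))
    (hΘ : ∀ n, ∀ i < ⌊(1/(K:ℝ) - η n) * n⌋₊, Measure.map (Θv n i) (μ n) = bern θ)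
    (hindep : ∀ n, iIndepFun
      (Sum.elim (fun i : Fin ⌊(1/(K:ℝ) - η n) * n⌋₊ => P n i)
        (Sum.elim (fun i : Fin ⌈η n * n⌉₊ => P' n i)
          (fun i : Fin ⌊(1/(K:ℝ) - η n) * n⌋₊ => Θv n i))) (μ n)) :
    Tendsto (fun n => (m n : ℝ≥0∞) * μ n {ω |
        ∑ i ∈ Finset.range ⌊(1/(K:ℝ) - η n) * n⌋₊, P n i ω * (1 - 2 * Θv n i ω)
          ≤ ∑ i ∈ Finset.range ⌈η n * n⌉₊, P' n i ω})
      atTop (nhds 0) := by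
  obtain ⟨hθ0, hθh⟩ := hθ
  -- basic facts about IθQ
  have hIθ : IθQ θ = 1 - 2 * Real.sqrt (θ * (1 - θ)) := by
    unfold IθQ
    rw [sub_sq, Real.sq_sqrt (by linarith : (0:ℝ) ≤ 1 - θ), Real.sq_sqrt hθ0,
      Real.sqrt_mul hθ0 (1 - θ)]
    ring
  have hI0 : 0 < IθQ θ := by
    have h1 : Real.sqrt θ < Real.sqrt (1 - θ) := Real.sqrt_lt_sqrt hθ0 (by linarith)
    exact pow_pos (sub_pos.2 h1) 2
  have hI1 : IθQ θ ≤ 1 := by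
    rw [hIθ]; linarith only [Real.sqrt_nonneg (θ * (1 - θ))]
  -- constants
  obtain ⟨δ0, hδ0def⟩ : ∃ x : ℝ, x = min (1/4) ((ε / (4 * (1 + ε))) ^ 2) := ⟨_, rfl⟩
  have hδ0pos : 0 < δ0 := by rw [hδ0def]; exact lt_min (by norm_num) (by positivity)
  have hδ0q : δ0 ≤ (ε / (4 * (1 + ε))) ^ 2 := by rw [hδ0def]; exact min_le_right _ _
  have hδ0quarter : δ0 ≤ 1/4 := by rw [hδ0def]; exact min_le_left _ _
  obtain ⟨θt, hθtdef⟩ : ∃ x : ℝ, x = max θ δ0 := ⟨_, rfl⟩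
  have hθt0 : 0 < θt := by
    rw [hθtdef]; exact lt_of_lt_of_le hδ0pos (le_max_right _ _)
  have hθth : θt ≤ 1/2 := by
    rw [hθtdef]; exact max_le (le_of_lt hθh) (hδ0quarter.trans (by norm_num))
  have hθtθ : θ ≤ θt := by rw [hθtdef]; exact le_max_left _ _
  obtain ⟨c, hcdef⟩ : ∃ x : ℝ, x = Real.sqrt ((1 - θt) / θt) := ⟨_, rfl⟩
  have hc0 : 0 < c := by
    rw [hcdef]; exact Real.sqrt_pos.2 (div_pos (by linarith) hθt0)
  have hcsq : c ^ 2 = (1 - θt) / θt := by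
    rw [hcdef]; exact Real.sq_sqrt (div_pos (by linarith) hθt0).le
  have hc1 : 1 ≤ c := by
    nlinarith only [hcsq, hc0, (le_div_iff₀ hθt0).2 (show (1:ℝ) * θt ≤ 1 - θt by linarith)]
  have hexpτ : Real.exp (Real.log c) = c := Real.exp_log hc0
  have hexpnegτ : Real.exp (-Real.log c) = 1/c := by rw [Real.exp_neg, hexpτ, one_div]
  have hτ0 : 0 ≤ Real.log c := Real.log_nonneg hc1
  obtain ⟨g, hgdef⟩ : ∃ x : ℝ, x = θ * c + (1 - θ) * (1/c) := ⟨_, rfl⟩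
  have hg0 : 0 ≤ g := by
    rw [hgdef]
    exact add_nonneg (mul_nonneg hθ0 hc0.le) (mul_nonneg (by linarith) (by positivity))
  obtain ⟨a, hadef⟩ : ∃ x : ℝ, x = 1 - g := ⟨_, rfl⟩
  have hstep : θt * c + (1 - θt) * (1/c) = 2 * Real.sqrt (θt * (1 - θt)) := by
    have h1 : c = Real.sqrt (1 - θt) / Real.sqrt θt := by
      rw [hcdef, Real.sqrt_div (by linarith) θt]
    have hst : 0 < Real.sqrt θt := Real.sqrt_pos.2 hθt0
    have hst1 : 0 < Real.sqrt (1 - θt) := Real.sqrt_pos.2 (by linarith)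
    rw [h1, one_div, inv_div, Real.sqrt_mul hθt0.le]
    have t1 : θt * (Real.sqrt (1 - θt) / Real.sqrt θt)
        = (θt / Real.sqrt θt) * Real.sqrt (1 - θt) := by ring
    have t2 : (1 - θt) * (Real.sqrt θt / Real.sqrt (1 - θt))
        = ((1 - θt) / Real.sqrt (1 - θt)) * Real.sqrt θt := by ring
    rw [t1, t2, Real.div_sqrt, Real.div_sqrt]
    ring
  have hmono : g ≤ θt * c + (1 - θt) * (1/c) := by
    have h1 : 1/c ≤ c := by
      have hcc : (1:ℝ) * 1 ≤ c * c :=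
        mul_le_mul hc1 hc1 (by norm_num) (le_trans (by norm_num) hc1)
      rw [div_le_iff₀ hc0]; linarith only [hcc]
    linarith only [mul_nonneg (sub_nonneg.2 hθtθ) (sub_nonneg.2 h1), hgdef]
  have claim1 : g ≤ 2 * Real.sqrt (θt * (1 - θt)) := hmono.trans (le_of_eq hstep)
  have hkey : (1 + ε/2) * IθQ θ ≤ (1 + ε) * a := by
    have hJt : 1 - 2 * Real.sqrt (θt * (1 - θt)) ≤ a := by
      rw [hadef]; linarith only [claim1]
    rcases le_or_gt δ0 θ with hcase | hcase
    · have hmx : θt = θ := by rw [hθtdef]; exact max_eq_left hcase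
      rw [hmx] at hJt
      have haI : IθQ θ ≤ a := by rw [hIθ]; linarith only [hJt]
      linarith only [haI, mul_nonneg hε.le (sub_nonneg.2 haI), mul_nonneg hε.le hI0.le]
    · have hmx : θt = δ0 := by rw [hθtdef]; exact max_eq_right hcase.le
      have hsδ : Real.sqrt (θt * (1 - θt)) ≤ Real.sqrt δ0 := by
        apply Real.sqrt_le_sqrt
        rw [hmx]
        calc δ0 * (1 - δ0) ≤ δ0 * 1 := by
              refine mul_le_mul_of_nonneg_left ?_ hδ0pos.le
              linarith only [hδ0pos]
          _ = δ0 := mul_one δ0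
      have hsδ2 : Real.sqrt δ0 ≤ ε / (4 * (1 + ε)) := by
        calc Real.sqrt δ0 ≤ Real.sqrt ((ε / (4 * (1 + ε))) ^ 2) :=
              Real.sqrt_le_sqrt hδ0q
          _ = ε / (4 * (1 + ε)) := Real.sqrt_sq (by positivity)
      have ha_lb : 1 - ε / (2 * (1 + ε)) ≤ a := by
        have h2 : 2 * (ε / (4 * (1 + ε))) = ε / (2 * (1 + ε)) := by
          field_simp; ring
        linarith only [hJt, hsδ, hsδ2, h2]
      have h2 : 1 + ε/2 ≤ (1 + ε) * a := by
        have hh := mul_le_mul_of_nonneg_left ha_lb (show (0:ℝ) ≤ 1 + ε by linarith)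
        have hid : (1 + ε) * (1 - ε / (2 * (1 + ε))) = 1 + ε - ε/2 := by
          field_simp
        linarith only [hh, hid]
      linarith only [h2,
        mul_nonneg (show (0:ℝ) ≤ 1 + ε/2 by linarith only [hε]) (sub_nonneg.2 hI1)]
  have ha0 : 0 < a := by
    nlinarith only [hkey, hε,
      mul_pos (show (0:ℝ) < 1 + ε/2 by linarith only [hε]) hI0]
  have ha1 : a ≤ 1 := by rw [hadef]; linarith only [hg0]
  have hp0 : ∀ n, 0 < p n := fun n => (hp n).1
  have hp1 : ∀ n, p n ≤ 1 := fun n => le_trans (hp n).2.le (by norm_num)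
  -- per-n bound
  have hbd : ∀ n, (m n : ℝ≥0∞) * μ n {ω |
        ∑ i ∈ Finset.range ⌊(1/(K:ℝ) - η n) * n⌋₊, P n i ω * (1 - 2 * Θv n i ω)
          ≤ ∑ i ∈ Finset.range ⌈η n * n⌉₊, P' n i ω}
      ≤ ENNReal.ofReal ((m n : ℝ) * Real.exp (p n * ((c - 1) * (⌈η n * n⌉₊ : ℝ)
          - a * (⌊(1/(K:ℝ) - η n) * n⌋₊ : ℝ)))) := by
    intro n
    set N := ⌊(1/(K:ℝ) - η n) * n⌋₊ with hNdef
    set M := ⌈η n * n⌉₊ with hMdef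
    set F : Fin N ⊕ (Fin M ⊕ Fin N) → Ω n → ℝ :=
      Sum.elim (fun i : Fin N => P n i)
        (Sum.elim (fun j : Fin M => P' n j) (fun i : Fin N => Θv n i)) with hFdef
    set q : Fin N ⊕ (Fin M ⊕ Fin N) → Measure ℝ :=
      Sum.elim (fun _ : Fin N => bern (p n))
        (Sum.elim (fun _ : Fin M => bern (p n)) (fun _ : Fin N => bern θ)) with hqdef
    have hq : ∀ i, Measure.map (F i) (μ n) = q i := by
      rintro (i | j | i)
      · exact hP n i i.isLt
      · exact hP' n j j.isLt
      · exact hΘ n i i.isLt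
    have hqp : ∀ i, IsProbabilityMeasure (q i) := by
      rintro (i | j | i)
      · exact bern_isProb (hp0 n).le (hp1 n)
      · exact bern_isProb (hp0 n).le (hp1 n)
      · exact bern_isProb hθ0 (by linarith)
    have hFae : ∀ i, AEMeasurable (F i) (μ n) := by
      intro i
      by_contra hcon
      have h0 := hq i
      rw [Measure.map_of_not_aemeasurable hcon] at h0
      haveI := hqp i
      have h1 := measure_univ (μ := q i)
      rw [← h0] at h1
      simp at h1
    set G : ∀ _i : Fin N ⊕ (Fin M ⊕ Fin N), Ω n → ℝ := fun i => (hFae i).mk (F i) with hGdef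
    have hG : ∀ i, Measurable (G i) := fun i => (hFae i).measurable_mk
    have hFG : ∀ i, F i =ᵐ[μ n] G i := fun i => (hFae i).ae_eq_mk
    have hmap := indep_map_pi (μ n) F G hG hFG (hindep n) q hq hqp
    have hD : MeasurableSet {x : Fin N ⊕ (Fin M ⊕ Fin N) → ℝ |
        ∑ i : Fin N, x (Sum.inl i) * (1 - 2 * x (Sum.inr (Sum.inr i)))
          ≤ ∑ j : Fin M, x (Sum.inr (Sum.inl j))} := by
      apply measurableSet_le <;> fun_prop
    have hAeq : μ n {ω | ∑ i ∈ Finset.range N, P n i ω * (1 - 2 * Θv n i ω)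
          ≤ ∑ i ∈ Finset.range M, P' n i ω}
        = Measure.pi q {x | ∑ i : Fin N, x (Sum.inl i) * (1 - 2 * x (Sum.inr (Sum.inr i)))
          ≤ ∑ j : Fin M, x (Sum.inr (Sum.inl j))} := by
      have hstep1 : μ n {ω | ∑ i ∈ Finset.range N, P n i ω * (1 - 2 * Θv n i ω)
            ≤ ∑ i ∈ Finset.range M, P' n i ω}
          = μ n ((fun ω i => G i ω) ⁻¹' {x |
              ∑ i : Fin N, x (Sum.inl i) * (1 - 2 * x (Sum.inr (Sum.inr i)))
                ≤ ∑ j : Fin M, x (Sum.inr (Sum.inl j))}) := by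
        refine measure_congr ?_
        have hae : ∀ᵐ ω ∂(μ n), ∀ i, F i ω = G i ω := ae_all_iff.mpr hFG
        filter_upwards [hae] with ω hω
        refine eq_iff_iff.mpr ?_
        show (∑ i ∈ Finset.range N, P n i ω * (1 - 2 * Θv n i ω)
            ≤ ∑ i ∈ Finset.range M, P' n i ω)
          ↔ (∑ i : Fin N, G (Sum.inl i) ω * (1 - 2 * G (Sum.inr (Sum.inr i)) ω)
            ≤ ∑ j : Fin M, G (Sum.inr (Sum.inl j)) ω)
        rw [← Fin.sum_univ_eq_sum_range (fun i => P n i ω * (1 - 2 * Θv n i ω)) N,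
          ← Fin.sum_univ_eq_sum_range (fun i => P' n i ω) M]
        have e1 : ∀ i : Fin N, G (Sum.inl i) ω = P n i ω :=
          fun i => (hω (Sum.inl i)).symm
        have e2 : ∀ i : Fin N, G (Sum.inr (Sum.inr i)) ω = Θv n i ω :=
          fun i => (hω (Sum.inr (Sum.inr i))).symm
        have e3 : ∀ j : Fin M, G (Sum.inr (Sum.inl j)) ω = P' n j ω :=
          fun j => (hω (Sum.inr (Sum.inl j))).symm
        simp_rw [e1, e2, e3]
      rw [hstep1, ← Measure.map_apply (measurable_pi_lambda _ hG) hD, hmap]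
    have hchern := chernoff_pi N M (p n) θ (Real.log c) (hp0 n).le (hp1 n) hθ0
      (by linarith) hτ0
    rw [hexpτ, hexpnegτ, ← hgdef, ← hqdef, ← hadef] at hchern
    have hbase1 : 0 ≤ 1 - p n * a := by
      linarith only [mul_nonneg (hp0 n).le (sub_nonneg.2 ha1), hp1 n]
    have hexp1 : 1 - p n * a ≤ Real.exp (-(p n * a)) := by
      linarith only [Real.add_one_le_exp (-(p n * a))]
    have hbase2 : 0 ≤ 1 + p n * (c - 1) := by
      linarith only [mul_nonneg (hp0 n).le (sub_nonneg.2 hc1)]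
    have hexp2 : 1 + p n * (c - 1) ≤ Real.exp (p n * (c - 1)) := by
      linarith only [Real.add_one_le_exp (p n * (c - 1))]
    have hBr : (1 - p n * a) ^ N * (1 + p n * (c - 1)) ^ M
        ≤ Real.exp (p n * ((c - 1) * (M : ℝ) - a * (N : ℝ))) := by
      calc (1 - p n * a) ^ N * (1 + p n * (c - 1)) ^ M
          ≤ (Real.exp (-(p n * a))) ^ N * (Real.exp (p n * (c - 1))) ^ M :=
            mul_le_mul (pow_le_pow_left₀ hbase1 hexp1 N) (pow_le_pow_left₀ hbase2 hexp2 M)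
              (pow_nonneg hbase2 M) (pow_nonneg (Real.exp_pos _).le N)
        _ = Real.exp ((N : ℝ) * (-(p n * a))) * Real.exp ((M : ℝ) * (p n * (c - 1))) := by
            rw [Real.exp_nat_mul, Real.exp_nat_mul]
        _ = Real.exp (p n * ((c - 1) * (M : ℝ) - a * (N : ℝ))) := by
            rw [← Real.exp_add]; congr 1; ring
    have hfin : μ n {ω | ∑ i ∈ Finset.range N, P n i ω * (1 - 2 * Θv n i ω)
        ≤ ∑ i ∈ Finset.range M, P' n i ω} ≠ ⊤ := measure_ne_top _ _
    have hto : (μ n {ω | ∑ i ∈ Finset.range N, P n i ω * (1 - 2 * Θv n i ω)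
        ≤ ∑ i ∈ Finset.range M, P' n i ω}).toReal
        ≤ Real.exp (p n * ((c - 1) * (M : ℝ) - a * (N : ℝ))) := by
      rw [hAeq]; exact hchern.trans hBr
    calc (m n : ℝ≥0∞) * μ n {ω | ∑ i ∈ Finset.range N, P n i ω * (1 - 2 * Θv n i ω)
          ≤ ∑ i ∈ Finset.range M, P' n i ω}
        = ENNReal.ofReal (m n : ℝ) * ENNReal.ofReal ((μ n {ω |
            ∑ i ∈ Finset.range N, P n i ω * (1 - 2 * Θv n i ω)
              ≤ ∑ i ∈ Finset.range M, P' n i ω}).toReal) := by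
          rw [ENNReal.ofReal_toReal hfin, ENNReal.ofReal_natCast]
      _ ≤ ENNReal.ofReal (m n : ℝ)
            * ENNReal.ofReal (Real.exp (p n * ((c - 1) * (M : ℝ) - a * (N : ℝ)))) :=
          mul_le_mul_right (ENNReal.ofReal_le_ofReal hto) _
      _ = ENNReal.ofReal ((m n : ℝ) * Real.exp (p n * ((c - 1) * (M : ℝ) - a * (N : ℝ)))) := by
          rw [ENNReal.ofReal_mul (by positivity)]
  -- asymptotics
  have hlog : Tendsto (fun n => Real.log (m n)) atTop atTop :=
    Real.tendsto_log_atTop.comp (tendsto_natCast_atTop_atTop.comp hm)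
  have hK0 : (0:ℝ) < K := by
    have : 0 < K := by omega
    exact_mod_cast this
  obtain ⟨σ, hσdef⟩ : ∃ x : ℝ, x = (ε/4) / (1 + ε/2) := ⟨_, rfl⟩
  have hσ0 : 0 ≤ σ := by rw [hσdef]; positivity
  have hσ1 : σ ≤ 1 := by
    rw [hσdef, div_le_one (by linarith)]; linarith
  have hσid : (1 - σ) * (1 + ε/2) = 1 + ε/4 := by
    rw [hσdef]; field_simp; ring
  have hacm : 0 < a + c - 1 := by linarith only [ha0, hc1]
  obtain ⟨ηstar, hηstardef⟩ : ∃ x : ℝ, x = σ * a / (K * (a + c - 1)) := ⟨_, rfl⟩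
  have hσpos : 0 < σ := by rw [hσdef]; positivity
  have hηstar0 : 0 < ηstar := by
    rw [hηstardef]
    exact div_pos (mul_pos hσpos ha0) (mul_pos hK0 hacm)
  have hev1 : ∀ᶠ n in atTop, η n ≤ ηstar := hη0.eventually (eventually_le_nhds hηstar0)
  have hev2 : ∀ᶠ n in atTop, 1 ≤ m n := hm.eventually (eventually_ge_atTop 1)
  have hEbound : ∀ᶠ n in atTop, Real.log (m n) + p n * ((c - 1) * (⌈η n * n⌉₊ : ℝ)
      - a * (⌊(1/(K:ℝ) - η n) * n⌋₊ : ℝ)) ≤ -(ε/4) * Real.log (m n) + c := by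
    filter_upwards [hev1, hev2] with n hn1 hn2
    have hLm0 : 0 ≤ Real.log (m n) := Real.log_nonneg (by exact_mod_cast hn2)
    have hη0n : 0 < η n := (hη n).1
    have hNlb : (1/(K:ℝ) - η n) * n - 1 ≤ (⌊(1/(K:ℝ) - η n) * n⌋₊ : ℝ) :=
      (Nat.sub_one_lt_floor _).le
    have hMub : (⌈η n * n⌉₊ : ℝ) ≤ η n * n + 1 :=
      (Nat.ceil_lt_add_one (mul_nonneg hη0n.le (Nat.cast_nonneg n))).le
    have hpc : 0 ≤ p n * (c - 1) := mul_nonneg (hp0 n).le (by linarith only [hc1])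
    have piece1 : p n * ((c - 1) * (⌈η n * n⌉₊ : ℝ))
        ≤ (c - 1) * η n * ((n:ℝ) * p n) + (c - 1) := by
      have h1 : p n * (c - 1) * (⌈η n * n⌉₊ : ℝ) ≤ p n * (c - 1) * (η n * n + 1) :=
        mul_le_mul_of_nonneg_left hMub hpc
      have h2 : p n * (c - 1) ≤ c - 1 := by
        have h3 := mul_le_mul_of_nonneg_right (hp1 n) (sub_nonneg.2 hc1)
        linarith only [h3]
      linarith only [h1, h2]
    have piece2 : a * (1/(K:ℝ) - η n) * ((n:ℝ) * p n) - 1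
        ≤ p n * (a * (⌊(1/(K:ℝ) - η n) * n⌋₊ : ℝ)) := by
      have hpa : 0 ≤ p n * a := mul_nonneg (hp0 n).le ha0.le
      have h1 : p n * a * ((1/(K:ℝ) - η n) * n - 1)
          ≤ p n * a * (⌊(1/(K:ℝ) - η n) * n⌋₊ : ℝ) :=
        mul_le_mul_of_nonneg_left hNlb hpa
      have h2 : p n * a ≤ 1 := mul_le_one₀ (hp1 n) ha0.le ha1
      linarith only [h1, h2]
    have hκ : ((1 - σ) * a) / K ≤ a * (1/(K:ℝ) - η n) - (c - 1) * η n := by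
      have h1 : (a + c - 1) * η n ≤ σ * a / K := by
        have h2 : (a + c - 1) * η n ≤ (a + c - 1) * ηstar :=
          mul_le_mul_of_nonneg_left hn1 hacm.le
        have h3 : (a + c - 1) * ηstar = σ * a / K := by
          rw [hηstardef]; field_simp
        exact le_of_le_of_eq h2 h3
      have h4 : a * (1/(K:ℝ) - η n) - (c - 1) * η n = a / K - (a + c - 1) * η n := by ring
      have h5 : ((1 - σ) * a) / K = a / K - σ * a / K := by ring
      linarith only [h1, h4, h5]
    have hκ0 : 0 ≤ ((1 - σ) * a) / K :=
      div_nonneg (mul_nonneg (by linarith only [hσ1]) ha0.le) hK0.le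
    have hκn0 : 0 ≤ a * (1/(K:ℝ) - η n) - (c - 1) * η n := le_trans hκ0 hκ
    have hnplb : (1 + ε) * K * Real.log (m n) / IθQ θ ≤ (n:ℝ) * p n :=
      (div_le_iff₀ hI0).2 (hinfo n)
    have hchain : (1 + ε/4) * Real.log (m n)
        ≤ (a * (1/(K:ℝ) - η n) - (c - 1) * η n) * ((n:ℝ) * p n) := by
      have s2 : ((1 - σ) * a) / K * ((1 + ε) * K * Real.log (m n) / IθQ θ)
          ≤ (a * (1/(K:ℝ) - η n) - (c - 1) * η n) * ((n:ℝ) * p n) :=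
        mul_le_mul hκ hnplb
          (div_nonneg (mul_nonneg (mul_nonneg (by linarith only [hε]) hK0.le) hLm0)
            hI0.le) hκn0
      have e : ((1 - σ) * a) / K * ((1 + ε) * K * Real.log (m n) / IθQ θ)
          = ((1 - σ) * ((1 + ε) * a)) * (Real.log (m n) / IθQ θ) := by
        field_simp
      have t1 : (1 - σ) * ((1 + ε/2) * IθQ θ) * (Real.log (m n) / IθQ θ)
          ≤ (1 - σ) * ((1 + ε) * a) * (Real.log (m n) / IθQ θ) :=
        mul_le_mul_of_nonneg_right
          (mul_le_mul_of_nonneg_left hkey (by linarith only [hσ1]))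
          (div_nonneg hLm0 hI0.le)
      have t2 : (1 - σ) * ((1 + ε/2) * IθQ θ) * (Real.log (m n) / IθQ θ)
          = (1 + ε/4) * Real.log (m n) := by
        rw [show (1 - σ) * ((1 + ε/2) * IθQ θ) * (Real.log (m n) / IθQ θ)
            = ((1 - σ) * (1 + ε/2)) * (IθQ θ * Real.log (m n) / IθQ θ) by ring,
          mul_div_cancel_left₀ _ hI0.ne', hσid]
      rw [t2] at t1
      calc (1 + ε/4) * Real.log (m n)
          ≤ (1 - σ) * ((1 + ε) * a) * (Real.log (m n) / IθQ θ) := t1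
        _ = ((1 - σ) * a) / K * ((1 + ε) * K * Real.log (m n) / IθQ θ) := e.symm
        _ ≤ _ := s2
    linarith only [piece1, piece2, hchain]
  have hrtend : Tendsto (fun n => (m n : ℝ) * Real.exp (p n * ((c - 1) * (⌈η n * n⌉₊ : ℝ)
      - a * (⌊(1/(K:ℝ) - η n) * n⌋₊ : ℝ)))) atTop (nhds 0) := by
    have h1 : Tendsto (fun n => -(ε/4) * Real.log (m n) + c) atTop atBot :=
      tendsto_atBot_add_const_right _ c (hlog.const_mul_atTop_of_neg (by linarith))
    have h2 : Tendsto (fun n => Real.log (m n) + p n * ((c - 1) * (⌈η n * n⌉₊ : ℝ)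
        - a * (⌊(1/(K:ℝ) - η n) * n⌋₊ : ℝ))) atTop atBot :=
      tendsto_atBot_mono' atTop hEbound h1
    have h3 := Real.tendsto_exp_atBot.comp h2
    refine h3.congr' ?_
    filter_upwards [hev2] with n hn
    have hmn0 : (0:ℝ) < m n := by
      have : 0 < m n := hn
      exact_mod_cast this
    show Real.exp _ = _
    rw [Real.exp_add, Real.exp_log hmn0]
  have hofReal : Tendsto (fun n => ENNReal.ofReal ((m n : ℝ)
      * Real.exp (p n * ((c - 1) * (⌈η n * n⌉₊ : ℝ)
      - a * (⌊(1/(K:ℝ) - η n) * n⌋₊ : ℝ))))) atTop (nhds 0) := by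
    rw [← ENNReal.ofReal_zero]
    exact ENNReal.tendsto_ofReal hrtend
  exact tendsto_of_tendsto_of_tendsto_of_le_of_le tendsto_const_nhds hofReal
    (fun n => zero_le) (fun n => hbd n)
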